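/- The K-linear map from Iuₙ to uₙ ⋉ uₙ* sending x_{ij} ↦ (e_{ij}, 0) for i < j, x_{ij} ↦ (0, e_{ji}*) for i > j, a_i ↦ (e_{ii}, 0), and b_i ↦ (0, 2 e_{ii}*) is an isomorphism of Lie algebras. -/

import Mathlib

/-- Index set for the basis of `Iuₙ`: the off-diagonal pairs indexing the `x_{ij}` (`i ≠ j`),
then the `a_i`'s, then the `b_i`'s. -/
abbrev IuIdx (n : ℕ) : Type := { p : Fin n × Fin n // p.1 ≠ p.2 } ⊕ (Fin n ⊕ Fin n)

/-- `Iuₙ`: the free `K`-vector space on the basis `{x_{ij} : i ≠ j} ∪ {a_i} ∪ {b_i}`. -/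
abbrev Iu (n : ℕ) (K : Type*) [Field K] : Type _ := IuIdx n →₀ K

variable (n : ℕ) (K : Type*) [Field K]

/-- The basis element `x_{ij}` (`i ≠ j`). -/
noncomputable def xE (i j : Fin n) (h : i ≠ j) : Iu n K :=
  Finsupp.single (Sum.inl ⟨(i, j), h⟩) 1

/-- The basis element `a_i`. -/
noncomputable def aE (i : Fin n) : Iu n K := Finsupp.single (Sum.inr (Sum.inl i)) 1

/-- The basis element `b_i`. -/
noncomputable def bE (i : Fin n) : Iu n K := Finsupp.single (Sum.inr (Sum.inr i)) 1

/-- `x_{ij}` as a total function (junk value `0` when `i = j`). -/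
noncomputable def xe (i j : Fin n) : Iu n K := if h : i ≠ j then xE n K i j h else 0

/-- The length `λ(i,j)`: equals `j - i` if `i < j`, and `n - (i - j)` if `i > j`. -/
def lam (n : ℕ) (i j : Fin n) : ℕ := (j - i : Fin n).val

/-- The bracket of `Iuₙ` on basis elements:
`[x_{ij}, x_{kl}] = δ_{jk} x_{il} - δ_{li} x_{kj}` if `λ(i,j) + λ(k,l) < n` and `0` otherwise
(unless both `j = k` and `l = i`); `[x_{ij}, x_{ji}] = ½(b_i - b_j)`;
`[a_i, x_{jk}] = (δ_{ij} - δ_{ik}) x_{jk}`; `[b_i, x_{jk}] = 0`;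
`[a_i, a_j] = [b_i, b_j] = [a_i, b_j] = 0`; extended antisymmetrically. -/
noncomputable def bb : IuIdx n → IuIdx n → Iu n K
  | Sum.inl ⟨(i, j), _⟩, Sum.inl ⟨(k, l), _⟩ =>
      if k = j ∧ l = i then ((2 : K)⁻¹) • (bE n K i - bE n K j)
      else if lam n i j + lam n k l < n then
        (if j = k then xe n K i l else 0) - (if l = i then xe n K k j else 0)
      else 0
  | Sum.inr (Sum.inl i), Sum.inl ⟨(j, k), _⟩ =>
      (((if i = j then 1 else 0) : K) - ((if i = k then 1 else 0) : K)) • xe n K j k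
  | Sum.inl ⟨(j, k), _⟩, Sum.inr (Sum.inl i) =>
      -((((if i = j then 1 else 0) : K) - ((if i = k then 1 else 0) : K)) • xe n K j k)
  | _, _ => 0

/-- The bilinear bracket of `Iuₙ`, extended bilinearly from its values on basis elements. -/
noncomputable def br : Iu n K →ₗ[K] Iu n K →ₗ[K] Iu n K :=
  Finsupp.lift (Iu n K →ₗ[K] Iu n K) K (IuIdx n) fun s =>
    Finsupp.lift (Iu n K) K (IuIdx n) fun t => bb n K s t

variable (n : ℕ) (K : Type*) [Field K]

attribute [local instance 100] LieRing.ofAssociativeRing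

/-- `uₙ`: the Lie algebra of upper triangular `n × n` matrices over `K`, as a Lie
subalgebra of the matrix algebra (whose bracket is the commutator). -/
def un : LieSubalgebra K (Matrix (Fin n) (Fin n) K) where
  carrier := {M | ∀ i j : Fin n, j < i → M i j = 0}
  add_mem' := by
    intro a b ha hb i j hij
    simp only [Matrix.add_apply, ha i j hij, hb i j hij, add_zero]
  zero_mem' := by intro i j hij; simp
  smul_mem' := by
    intro c a ha i j hij
    simp only [Matrix.smul_apply, ha i j hij, smul_zero]
  lie_mem' := by
    intro x y hx hy
    have key : ∀ a b : Matrix (Fin n) (Fin n) K,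
        (∀ i j : Fin n, j < i → a i j = 0) → (∀ i j : Fin n, j < i → b i j = 0) →
        ∀ i j : Fin n, j < i → (a * b) i j = 0 := by
      intro a b ha hb i j hij
      rw [Matrix.mul_apply]
      apply Finset.sum_eq_zero
      intro k _
      rcases lt_or_ge k i with h' | h'
      · rw [ha i k h', zero_mul]
      · rw [hb k j (lt_of_lt_of_le hij h'), mul_zero]
    intro i j hij
    rw [Ring.lie_def, Matrix.sub_apply, key x y hx hy i j hij, key y x hy hx i j hij, sub_zero]

/-- The coadjoint action `(x · f)(v) = f ⁅v, x⁆` of `uₙ` on its dual. -/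
noncomputable def coact (x : un n K) (f : Module.Dual K (un n K)) : Module.Dual K (un n K) :=
  f ∘ₗ (-(LieAlgebra.ad K (un n K) x))

/-- The semidirect product bracket `[(x,f),(y,g)] = ([x,y], x·g - y·f)` on `uₙ ⋉ uₙ*`,
where `uₙ*` is abelian with the coadjoint `uₙ`-action. -/
noncomputable def sd (p q : un n K × Module.Dual K (un n K)) :
    un n K × Module.Dual K (un n K) :=
  (⁅p.1, q.1⁆, coact n K p.1 q.2 - coact n K q.1 p.2)

/-- The matrix unit `e_{ij}` (for `i ≤ j`) as an element of `uₙ`. -/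
noncomputable def eU (i j : Fin n) (hij : i ≤ j) : un n K :=
  ⟨Matrix.single i j 1, by
    intro a b hba
    by_cases hia : i = a
    · by_cases hjb : j = b
      · exact absurd hba (not_lt.mpr (hjb ▸ hia ▸ hij))
      · simp [Matrix.single, hjb]
    · simp [Matrix.single, hia]⟩

/-- The dual basis element `e_{ij}*` (for `i ≤ j`): on the basis `{e_{kl} : k ≤ l}` of `uₙ`
it is the functional reading off the `(i,j)` entry. -/
noncomputable def estar (i j : Fin n) : Module.Dual K (un n K) where
  toFun M := (M : Matrix (Fin n) (Fin n) K) i j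
  map_add' := by intros; rfl
  map_smul' := by intros; rfl

/-- The linear map `Iuₙ → uₙ ⋉ uₙ*` of Statement 2: `x_{ij} ↦ (e_{ij}, 0)` for `i < j`,
`x_{ij} ↦ (0, e_{ji}*)` for `i > j`, `a_i ↦ (e_{ii}, 0)`, `b_i ↦ (0, 2 e_{ii}*)`. -/
noncomputable def T : Iu n K →ₗ[K] un n K × Module.Dual K (un n K) :=
  Finsupp.lift (un n K × Module.Dual K (un n K)) K (IuIdx n) fun t =>
    match t with
    | Sum.inl ⟨(i, j), _⟩ =>
        if hij : i < j then (eU n K i j hij.le, 0) else (0, estar n K j i)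
    | Sum.inr (Sum.inl i) => (eU n K i i le_rfl, 0)
    | Sum.inr (Sum.inr i) => (0, (2 : K) • estar n K i i)

section Aux

variable {n : ℕ} {K : Type*} [Field K]

lemma estar_apply (i j : Fin n) (M : un n K) :
    estar n K i j M = (M : Matrix (Fin n) (Fin n) K) i j := rfl

lemma estar_eq_zero {i j : Fin n} (h : j < i) : estar n K i j = 0 := by
  ext M; exact M.2 i j h

lemma coe_eU (i j : Fin n) (h : i ≤ j) :
    ((eU n K i j h : un n K) : Matrix (Fin n) (Fin n) K) = Matrix.single i j 1 := rfl

lemma coact_apply (x : un n K) (f : Module.Dual K (un n K)) (M : un n K) :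
    coact n K x f M = f ⁅M, x⁆ := by
  have h1 : coact n K x f M = f (-⁅x, M⁆) := rfl
  rw [h1, lie_skew]

lemma coact_eU_estar (i j k l : Fin n) (hij : i ≤ j) :
    coact n K (eU n K i j hij) (estar n K k l) =
      (if l = j then estar n K k i else 0) - (if k = i then estar n K j l else 0) := by
  ext M
  rw [coact_apply, estar_apply, LieSubalgebra.coe_bracket, coe_eU, Ring.lie_def,
    Matrix.sub_apply]
  by_cases hlj : l = j
  · subst hlj
    rw [Matrix.mul_single_apply_same]
    by_cases hki : k = i
    · subst hki
      rw [Matrix.single_mul_apply_same]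
      simp [estar_apply]
    · rw [Matrix.single_mul_apply_of_ne _ _ _ _ _ hki]
      simp [estar_apply, hki]
  · rw [Matrix.mul_single_apply_of_ne _ _ _ _ _ hlj]
    by_cases hki : k = i
    · subst hki
      rw [Matrix.single_mul_apply_same]
      simp [estar_apply, hlj]
    · rw [Matrix.single_mul_apply_of_ne _ _ _ _ _ hki]
      simp [estar_apply, hlj, hki]

lemma coact_zero_left (f : Module.Dual K (un n K)) : coact n K 0 f = 0 := by
  ext M; rw [coact_apply]; simp

lemma coact_zero_right (x : un n K) : coact n K x 0 = 0 := by
  ext M; rw [coact_apply]; simp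

lemma lie_eU (i j k l : Fin n) (hij : i ≤ j) (hkl : k ≤ l) :
    (((⁅eU n K i j hij, eU n K k l hkl⁆ : ↥(un n K))) : Matrix (Fin n) (Fin n) K)
      = (if j = k then Matrix.single i l 1 else 0)
        - (if l = i then Matrix.single k j 1 else 0) := by
  rw [LieSubalgebra.coe_bracket, coe_eU, coe_eU, Ring.lie_def]
  by_cases hjk : j = k <;> by_cases hli : l = i <;>
    simp [hjk, hli, Matrix.single_mul_single_same, Matrix.single_mul_single_of_ne]

end Aux
section Aux2

variable {n : ℕ} {K : Type*} [Field K]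

lemma lam_val (i j : Fin n) :
    lam n i j = if i.val ≤ j.val then j.val - i.val else n - (i.val - j.val) := by
  have hi := i.isLt; have hj := j.isLt
  rw [lam, Fin.sub_def]
  simp only [Fin.val_mk]
  split
  · next h =>
      have h2 : n - i.val + j.val = (j.val - i.val) + n := by omega
      rw [h2, Nat.add_mod_right, Nat.mod_eq_of_lt (by omega)]
  · next h => rw [Nat.mod_eq_of_lt (by omega)]; omega

lemma T_xE {i j : Fin n} (h : i ≠ j) :
    T n K (xE n K i j h) =
      if hij : i < j then (eU n K i j hij.le, 0) else (0, estar n K j i) := by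
  simp [T, xE, Finsupp.lift_apply, Finsupp.sum_single_index]

lemma T_xe_lt {i j : Fin n} (h : i < j) : T n K (xe n K i j) = (eU n K i j h.le, 0) := by
  rw [xe, dif_pos h.ne, T_xE, dif_pos h]

lemma T_xe_gt {i j : Fin n} (h : j < i) : T n K (xe n K i j) = (0, estar n K j i) := by
  rw [xe, dif_pos h.ne', T_xE, dif_neg (by exact fun hc => absurd hc (not_lt.mpr h.le))]

lemma T_aE (i : Fin n) : T n K (aE n K i) = (eU n K i i le_rfl, 0) := by
  simp [T, aE, Finsupp.lift_apply, Finsupp.sum_single_index]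

lemma T_bE (i : Fin n) : T n K (bE n K i) = (0, (2 : K) • estar n K i i) := by
  simp [T, bE, Finsupp.lift_apply, Finsupp.sum_single_index]

lemma coact_add_left (x y : un n K) (f : Module.Dual K (un n K)) :
    coact n K (x + y) f = coact n K x f + coact n K y f := by
  ext M; simp [coact_apply, lie_add]

lemma coact_smul_left (c : K) (x : un n K) (f : Module.Dual K (un n K)) :
    coact n K (c • x) f = c • coact n K x f := by
  ext M; simp [coact_apply, lie_smul]

lemma coact_add_right (x : un n K) (f g : Module.Dual K (un n K)) :
    coact n K x (f + g) = coact n K x f + coact n K x g := by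
  ext M; simp [coact_apply]

lemma coact_smul_right (c : K) (x : un n K) (f : Module.Dual K (un n K)) :
    coact n K x (c • f) = c • coact n K x f := by
  ext M; simp [coact_apply]

noncomputable def sdB (n : ℕ) (K : Type*) [Field K] :
    (un n K × Module.Dual K (un n K)) →ₗ[K] (un n K × Module.Dual K (un n K)) →ₗ[K]
      (un n K × Module.Dual K (un n K)) :=
  LinearMap.mk₂ K (sd n K)
    (fun p p' q => by
      ext : 1
      · simp [sd, add_lie]
      · simp [sd, coact_add_left, coact_add_right]; abel)
    (fun c p q => by
      ext : 1
      · simp [sd, smul_lie]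
      · simp [sd, coact_smul_left, coact_smul_right, smul_sub])
    (fun p q q' => by
      ext : 1
      · simp [sd, lie_add]
      · simp [sd, coact_add_left, coact_add_right]; abel)
    (fun c p q => by
      ext : 1
      · simp [sd, lie_smul]
      · simp [sd, coact_smul_left, coact_smul_right, smul_sub])

lemma sd_skew (p q : un n K × Module.Dual K (un n K)) : sd n K p q = - sd n K q p := by
  ext : 1
  · simp [sd, lie_skew]
  · simp [sd, neg_sub]

end Aux2
section Aux3

variable {n : ℕ} {K : Type*} [Field K]

lemma prod_eq {A B : Type*} [AddCommMonoid A] [AddCommMonoid B]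
    {p q : A × B} (h1 : p.1 = q.1) (h2 : p.2 = q.2) : p = q :=
  Prod.ext h1 h2

lemma sd_uu (x y : un n K) : sd n K (x, 0) (y, 0) = (⁅x, y⁆, 0) := by
  show (⁅x,y⁆, coact n K x 0 - coact n K y 0) = _
  rw [coact_zero_right, coact_zero_right, sub_zero]

lemma sd_ud (x : un n K) (g : Module.Dual K (un n K)) :
    sd n K (x, 0) (0, g) = (0, coact n K x g) := by
  show (⁅x, 0⁆, coact n K x g - coact n K 0 0) = _
  rw [coact_zero_left, lie_zero, sub_zero]

lemma sd_du (f : Module.Dual K (un n K)) (y : un n K) :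
    sd n K (0, f) (y, 0) = (0, - coact n K y f) := by
  show (⁅(0 : un n K), y⁆, coact n K 0 0 - coact n K y f) = _
  rw [coact_zero_left, zero_lie, zero_sub]

lemma sd_dd (f g : Module.Dual K (un n K)) : sd n K (0, f) (0, g) = 0 := by
  show (⁅(0 : un n K), (0 : un n K)⁆, coact n K 0 g - coact n K 0 f) = _
  rw [coact_zero_left, coact_zero_left, zero_lie, sub_self]
  rfl

set_option maxHeartbeats 1000000 in
lemma key_xx (hK : (2:K) ≠ 0) (i j k l : Fin n) (hij : i ≠ j) (hkl : k ≠ l) :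
    T n K (bb n K (Sum.inl ⟨(i,j),hij⟩) (Sum.inl ⟨(k,l),hkl⟩)) =
      sd n K (T n K (xE n K i j hij)) (T n K (xE n K k l hkl)) := by
  simp only [bb]
  rw [T_xE hij, T_xE hkl]
  rcases lt_or_gt_of_ne hij with h1 | h1 <;> rcases lt_or_gt_of_ne hkl with h2 | h2
  · -- UU : i < j, k < l
    have v1 : i.val < j.val := h1
    have v2 : k.val < l.val := h2
    rw [dif_pos h1, dif_pos h2, sd_uu]
    have hne : ¬(k = j ∧ l = i) := by
      rintro ⟨h3, h4⟩
      have := congrArg Fin.val h3; have := congrArg Fin.val h4; omega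
    rw [if_neg hne]
    have hlam : lam n i j + lam n k l = (j.val - i.val) + (l.val - k.val) := by
      rw [lam_val, lam_val, if_pos v1.le, if_pos v2.le]
    by_cases hC : lam n i j + lam n k l < n
    · rw [if_pos hC]
      by_cases hjk : j = k
      · have vjk := congrArg Fin.val hjk
        have hli : ¬ l = i := fun h => by have := congrArg Fin.val h; omega
        have hil : i < l := by rw [Fin.lt_def]; omega
        rw [if_pos hjk, if_neg hli, sub_zero, T_xe_lt hil]
        refine prod_eq ?_ rfl
        refine (Subtype.ext ?_).symm
        rw [lie_eU, if_pos hjk, if_neg hli, sub_zero, coe_eU]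
      · by_cases hli : l = i
        · have vli := congrArg Fin.val hli
          have hkj : k < j := by rw [Fin.lt_def]; omega
          rw [if_neg hjk, if_pos hli, zero_sub, map_neg, T_xe_lt hkj]
          refine prod_eq ?_ (by simp)
          refine (Subtype.ext ?_).symm
          rw [lie_eU, if_neg hjk, if_pos hli, zero_sub]
          rfl
        · rw [if_neg hjk, if_neg hli, sub_zero, map_zero]
          have hz : ⁅eU n K i j h1.le, eU n K k l h2.le⁆ = (0 : un n K) := by
            rw [← ZeroMemClass.coe_eq_zero, lie_eU, if_neg hjk, if_neg hli, sub_zero]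
          rw [hz]
          rfl
    · rw [if_neg hC, map_zero]
      have hl := l.isLt; have hj := j.isLt
      have hjk : ¬ j = k := fun h => by have := congrArg Fin.val h; omega
      have hli : ¬ l = i := fun h => by have := congrArg Fin.val h; omega
      have hz : ⁅eU n K i j h1.le, eU n K k l h2.le⁆ = (0 : un n K) := by
        rw [← ZeroMemClass.coe_eq_zero, lie_eU, if_neg hjk, if_neg hli, sub_zero]
      rw [hz]
      rfl
  · -- UL : i < j, l < k
    have v1 : i.val < j.val := h1
    have v2 : l.val < k.val := h2
    have hk := k.isLt
    rw [dif_pos h1, dif_neg (by exact fun hc => absurd hc (not_lt.mpr h2.le)), sd_ud,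
      coact_eU_estar]
    by_cases hb : k = j ∧ l = i
    · obtain ⟨h3, h4⟩ := hb
      rw [if_pos ⟨h3, h4⟩, map_smul, map_sub, T_bE, T_bE, if_pos h3, if_pos h4,
        Prod.mk_sub_mk, Prod.smul_mk]
      refine prod_eq (by simp) ?_
      show (2:K)⁻¹ • ((2:K) • estar n K i i - (2:K) • estar n K j j) = _
      rw [smul_sub, smul_smul, smul_smul, inv_mul_cancel₀ hK, one_smul, one_smul, h3, h4]
    · rw [if_neg hb]
      have hlam : lam n i j + lam n k l = (j.val - i.val) + (n - (k.val - l.val)) := by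
        rw [lam_val, lam_val, if_pos v1.le, if_neg (by omega)]
      by_cases hC : lam n i j + lam n k l < n
      · rw [if_pos hC]
        by_cases hjk : j = k
        · have vjk := congrArg Fin.val hjk
          have hli : ¬ l = i := fun h => hb ⟨hjk.symm, h⟩
          have vli : ¬ l.val = i.val := fun h => hli (Fin.ext h)
          have hli2 : l < i := by rw [Fin.lt_def]; omega
          rw [if_pos hjk, if_neg hli, sub_zero, T_xe_gt hli2]
          refine prod_eq rfl ?_
          show estar n K l i = _
          rw [if_pos hjk.symm, if_neg hli, sub_zero]
        · by_cases hli : l = i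
          · have vli := congrArg Fin.val hli
            have hjklt : j < k := by rw [Fin.lt_def]; omega
            rw [if_neg hjk, if_pos hli, zero_sub, map_neg, T_xe_gt hjklt]
            refine prod_eq (by simp) ?_
            show -(estar n K j k) = _
            rw [if_neg (fun h => hjk h.symm), if_pos hli, zero_sub]
          · rw [if_neg hjk, if_neg hli, sub_zero, map_zero]
            symm
            refine prod_eq rfl ?_
            rw [if_neg (fun h => hjk h.symm), if_neg hli, sub_zero]
            rfl
      · rw [if_neg hC, map_zero]
        have e1 : (if k = j then estar n K l i else 0) = 0 := by
          split
          · next h3 =>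
              have v3 := congrArg Fin.val h3
              have hli : ¬ l = i := fun h => hb ⟨h3, h⟩
              have vli : ¬ l.val = i.val := fun h => hli (Fin.ext h)
              exact estar_eq_zero (by rw [Fin.lt_def]; omega)
          · rfl
        have e2 : (if l = i then estar n K j k else 0) = 0 := by
          split
          · next h4 =>
              have v4 := congrArg Fin.val h4
              have hjk : ¬ k = j := fun h => hb ⟨h, h4⟩
              have vjk : ¬ k.val = j.val := fun h => hjk (Fin.ext h)
              exact estar_eq_zero (by rw [Fin.lt_def]; omega)
          · rfl
        symm
        refine prod_eq rfl ?_
        rw [e1, e2, sub_zero]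
        rfl
  · -- LU : j < i, k < l
    have v1 : j.val < i.val := h1
    have v2 : k.val < l.val := h2
    have hi := i.isLt
    rw [dif_neg (by exact fun hc => absurd hc (not_lt.mpr h1.le)), dif_pos h2, sd_du,
      coact_eU_estar]
    by_cases hb : k = j ∧ l = i
    · obtain ⟨h3, h4⟩ := hb
      rw [if_pos ⟨h3, h4⟩, map_smul, map_sub, T_bE, T_bE, if_pos h4.symm, if_pos h3.symm,
        Prod.mk_sub_mk, Prod.smul_mk]
      refine prod_eq (by simp) ?_
      show (2:K)⁻¹ • ((2:K) • estar n K i i - (2:K) • estar n K j j) = _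
      rw [smul_sub, smul_smul, smul_smul, inv_mul_cancel₀ hK, one_smul, one_smul, h3, h4,
        neg_sub]
    · rw [if_neg hb]
      have hlam : lam n i j + lam n k l = (n - (i.val - j.val)) + (l.val - k.val) := by
        rw [lam_val, lam_val, if_neg (by omega), if_pos v2.le]
      by_cases hC : lam n i j + lam n k l < n
      · rw [if_pos hC]
        by_cases hjk : j = k
        · have vjk := congrArg Fin.val hjk
          have hli : ¬ l = i := fun h => hb ⟨hjk.symm, h⟩
          have vli : ¬ l.val = i.val := fun h => hli (Fin.ext h)
          have hli2 : l < i := by rw [Fin.lt_def]; omega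
          rw [if_pos hjk, if_neg hli, sub_zero, T_xe_gt hli2]
          refine prod_eq rfl ?_
          show estar n K l i = _
          rw [if_neg (fun h => hli h.symm), if_pos hjk, zero_sub, neg_neg]
        · by_cases hli : l = i
          · have vli := congrArg Fin.val hli
            have hjklt : j < k := by rw [Fin.lt_def]; omega
            rw [if_neg hjk, if_pos hli, zero_sub, map_neg, T_xe_gt hjklt]
            refine prod_eq (by simp) ?_
            show -(estar n K j k) = _
            rw [if_pos hli.symm, if_neg hjk, sub_zero]
          · rw [if_neg hjk, if_neg hli, sub_zero, map_zero]
            symm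
            refine prod_eq rfl ?_
            rw [if_neg (fun h => hli h.symm), if_neg hjk, sub_zero, neg_zero]
            rfl
      · rw [if_neg hC, map_zero]
        have e1 : (if i = l then estar n K j k else 0) = 0 := by
          split
          · next h4 =>
              have v4 := congrArg Fin.val h4
              have hjk : ¬ k = j := fun h => hb ⟨h, h4.symm⟩
              have vjk : ¬ k.val = j.val := fun h => hjk (Fin.ext h)
              exact estar_eq_zero (by rw [Fin.lt_def]; omega)
          · rfl
        have e2 : (if j = k then estar n K l i else 0) = 0 := by
          split
          · next h3 =>
              have v3 := congrArg Fin.val h3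
              have hli : ¬ l = i := fun h => hb ⟨h3.symm, h⟩
              have vli : ¬ l.val = i.val := fun h => hli (Fin.ext h)
              exact estar_eq_zero (by rw [Fin.lt_def]; omega)
          · rfl
        symm
        refine prod_eq rfl ?_
        rw [e1, e2, sub_zero, neg_zero]
        rfl
  · -- LL : j < i, l < k
    have v1 : j.val < i.val := h1
    have v2 : l.val < k.val := h2
    have hi := i.isLt; have hk := k.isLt
    rw [dif_neg (by exact fun hc => absurd hc (not_lt.mpr h1.le)),
      dif_neg (by exact fun hc => absurd hc (not_lt.mpr h2.le)), sd_dd]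
    have hne : ¬(k = j ∧ l = i) := by
      rintro ⟨h3, h4⟩
      have := congrArg Fin.val h3; have := congrArg Fin.val h4; omega
    rw [if_neg hne]
    have hlam : lam n i j + lam n k l = (n - (i.val - j.val)) + (n - (k.val - l.val)) := by
      rw [lam_val, lam_val, if_neg (by omega), if_neg (by omega)]
    by_cases hC : lam n i j + lam n k l < n
    · rw [if_pos hC]
      have hjk : ¬ j = k := fun h => by have := congrArg Fin.val h; omega
      have hli : ¬ l = i := fun h => by have := congrArg Fin.val h; omega
      rw [if_neg hjk, if_neg hli, sub_zero, map_zero]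
    · rw [if_neg hC, map_zero]

end Aux3
section Aux4

variable {n : ℕ} {K : Type*} [Field K]

lemma coact_estar_diag_zero (i j k : Fin n) (h2 : j < k) :
    coact n K (eU n K j k h2.le) (estar n K i i) = 0 := by
  rw [coact_eU_estar]
  have e1 : (if i = k then estar n K i j else 0) = 0 := by
    split
    · next h3 => rw [h3]; exact estar_eq_zero h2
    · rfl
  have e2 : (if i = j then estar n K k i else 0) = 0 := by
    split
    · next h3 => rw [h3]; exact estar_eq_zero h2
    · rfl
  rw [e1, e2, sub_zero]

lemma key_ax (i j k : Fin n) (h : j ≠ k) :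
    T n K (bb n K (Sum.inr (Sum.inl i)) (Sum.inl ⟨(j,k),h⟩)) =
      sd n K (T n K (aE n K i)) (T n K (xE n K j k h)) := by
  simp only [bb]
  rw [T_aE, T_xE h]
  by_cases hij : i = j
  · have hik : ¬ i = k := fun hh => h (hij.symm.trans hh)
    rw [if_pos hij, if_neg hik, sub_zero, one_smul]
    rcases lt_or_gt_of_ne h with h2 | h2
    · rw [dif_pos h2, T_xe_lt h2, sd_uu]
      refine prod_eq ?_ rfl
      symm
      refine Subtype.ext ?_
      rw [lie_eU, if_pos hij, if_neg (fun hh => hik hh.symm), sub_zero, coe_eU, hij]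
    · rw [dif_neg (fun hc => absurd hc (not_lt.mpr h2.le)), T_xe_gt h2, sd_ud, coact_eU_estar]
      refine prod_eq rfl ?_
      show estar n K k j = _
      rw [if_pos hij.symm, if_neg (fun hh => hik hh.symm), sub_zero, hij]
  · by_cases hik : i = k
    · rw [if_neg hij, if_pos hik, zero_sub, neg_smul, one_smul, map_neg]
      rcases lt_or_gt_of_ne h with h2 | h2
      · rw [dif_pos h2, T_xe_lt h2, sd_uu]
        refine prod_eq ?_ (by simp)
        symm
        show ⁅eU n K i i le_rfl, eU n K j k h2.le⁆ = _
        refine Subtype.ext ?_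
        rw [lie_eU, if_neg hij, if_pos hik.symm, zero_sub, hik]
        rfl
      · rw [dif_neg (fun hc => absurd hc (not_lt.mpr h2.le)), T_xe_gt h2, sd_ud,
          coact_eU_estar]
        refine prod_eq (by simp) ?_
        show -(estar n K k j) = _
        rw [if_neg (fun hh => hij hh.symm), if_pos hik.symm, zero_sub, hik]
    · rw [if_neg hij, if_neg hik, sub_zero, zero_smul, map_zero]
      rcases lt_or_gt_of_ne h with h2 | h2
      · rw [dif_pos h2, sd_uu]
        have hz : ⁅eU n K i i le_rfl, eU n K j k h2.le⁆ = (0 : un n K) := by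
          rw [← ZeroMemClass.coe_eq_zero, lie_eU, if_neg hij,
            if_neg (fun hh => hik hh.symm), sub_zero]
        rw [hz]
        rfl
      · rw [dif_neg (fun hc => absurd hc (not_lt.mpr h2.le)), sd_ud, coact_eU_estar]
        symm
        refine prod_eq rfl ?_
        rw [if_neg (fun hh => hij hh.symm), if_neg (fun hh => hik hh.symm), sub_zero]
        rfl

lemma sd_bx_zero (i j k : Fin n) (h : j ≠ k) :
    sd n K (0, (2:K) • estar n K i i) (T n K (xE n K j k h)) = 0 := by
  rw [T_xE h]
  rcases lt_or_gt_of_ne h with h2 | h2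
  · rw [dif_pos h2, sd_du, coact_smul_right, coact_estar_diag_zero i j k h2, smul_zero,
      neg_zero]
    rfl
  · rw [dif_neg (fun hc => absurd hc (not_lt.mpr h2.le)), sd_dd]

lemma key_bx (i j k : Fin n) (h : j ≠ k) :
    T n K (bb n K (Sum.inr (Sum.inr i)) (Sum.inl ⟨(j,k),h⟩)) =
      sd n K (T n K (bE n K i)) (T n K (xE n K j k h)) := by
  have hb : bb n K (Sum.inr (Sum.inr i)) (Sum.inl ⟨(j,k),h⟩) = 0 := rfl
  rw [hb, map_zero, T_bE, sd_bx_zero]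

lemma key_xb (i j k : Fin n) (h : j ≠ k) :
    T n K (bb n K (Sum.inl ⟨(j,k),h⟩) (Sum.inr (Sum.inr i))) =
      sd n K (T n K (xE n K j k h)) (T n K (bE n K i)) := by
  have hb : bb n K (Sum.inl ⟨(j,k),h⟩) (Sum.inr (Sum.inr i)) = 0 := rfl
  rw [hb, map_zero, sd_skew, T_bE, sd_bx_zero, neg_zero]

lemma key_xa (i j k : Fin n) (h : j ≠ k) :
    T n K (bb n K (Sum.inl ⟨(j,k),h⟩) (Sum.inr (Sum.inl i))) =
      sd n K (T n K (xE n K j k h)) (T n K (aE n K i)) := by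
  have hb : bb n K (Sum.inl ⟨(j,k),h⟩) (Sum.inr (Sum.inl i))
      = - bb n K (Sum.inr (Sum.inl i)) (Sum.inl ⟨(j,k),h⟩) := rfl
  rw [hb, map_neg, key_ax, sd_skew, neg_neg]

lemma key_aa (i j : Fin n) :
    T n K (bb n K (Sum.inr (Sum.inl i)) (Sum.inr (Sum.inl j))) =
      sd n K (T n K (aE n K i)) (T n K (aE n K j)) := by
  have hb : bb n K (Sum.inr (Sum.inl i)) (Sum.inr (Sum.inl j)) = 0 := rfl
  rw [hb, map_zero, T_aE, T_aE, sd_uu]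
  have hz : ⁅eU n K i i le_rfl, eU n K j j le_rfl⁆ = (0 : un n K) := by
    rw [← ZeroMemClass.coe_eq_zero, lie_eU]
    by_cases hij : i = j
    · rw [if_pos hij, if_pos hij.symm, hij, sub_self]
    · rw [if_neg hij, if_neg (fun hh => hij hh.symm), sub_zero]
  rw [hz]
  rfl

lemma coact_diag_diag (i j : Fin n) :
    coact n K (eU n K i i le_rfl) ((2:K) • estar n K j j) = 0 := by
  rw [coact_smul_right, coact_eU_estar]
  by_cases hij : j = i
  · rw [if_pos hij, if_pos hij, hij, sub_self, smul_zero]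
  · rw [if_neg hij, if_neg hij, sub_zero, smul_zero]

lemma key_ab (i j : Fin n) :
    T n K (bb n K (Sum.inr (Sum.inl i)) (Sum.inr (Sum.inr j))) =
      sd n K (T n K (aE n K i)) (T n K (bE n K j)) := by
  have hb : bb n K (Sum.inr (Sum.inl i)) (Sum.inr (Sum.inr j)) = 0 := rfl
  rw [hb, map_zero, T_aE, T_bE, sd_ud, coact_diag_diag]
  rfl

lemma key_ba (i j : Fin n) :
    T n K (bb n K (Sum.inr (Sum.inr i)) (Sum.inr (Sum.inl j))) =
      sd n K (T n K (bE n K i)) (T n K (aE n K j)) := by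
  have hb : bb n K (Sum.inr (Sum.inr i)) (Sum.inr (Sum.inl j)) = 0 := rfl
  rw [hb, map_zero, T_bE, T_aE, sd_du, coact_diag_diag, neg_zero]
  rfl

lemma key_bb (i j : Fin n) :
    T n K (bb n K (Sum.inr (Sum.inr i)) (Sum.inr (Sum.inr j))) =
      sd n K (T n K (bE n K i)) (T n K (bE n K j)) := by
  have hb : bb n K (Sum.inr (Sum.inr i)) (Sum.inr (Sum.inr j)) = 0 := rfl
  rw [hb, map_zero, T_bE, T_bE, sd_dd]

lemma key_all (hK : (2:K) ≠ 0) (s t : IuIdx n) :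
    T n K (bb n K s t) =
      sd n K (T n K (Finsupp.single s 1)) (T n K (Finsupp.single t 1)) := by
  rcases s with ⟨⟨i,j⟩,hij⟩ | i | i <;> rcases t with ⟨⟨k,l⟩,hkl⟩ | m | m
  · exact key_xx hK i j k l hij hkl
  · exact key_xa m i j hij
  · exact key_xb m i j hij
  · exact key_ax i k l hkl
  · exact key_aa i m
  · exact key_ab i m
  · exact key_bx i k l hkl
  · exact key_ba i m
  · exact key_bb i m

end Aux4
section Aux5

variable (n : ℕ) (K : Type*) [Field K]

noncomputable def euT (a b : Fin n) : un n K := if h : a ≤ b then eU n K a b h else 0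

noncomputable def gIu (a b : Fin n) : Iu n K := if a = b then aE n K a else xe n K a b

noncomputable def hIu (a b : Fin n) : Iu n K :=
  if a = b then (2:K)⁻¹ • bE n K a else xe n K b a

noncomputable def S1 : un n K →ₗ[K] Iu n K :=
  ∑ p : Fin n × Fin n, (estar n K p.1 p.2).smulRight (gIu n K p.1 p.2)

noncomputable def S2 : Module.Dual K (un n K) →ₗ[K] Iu n K :=
  ∑ p : Fin n × Fin n,
    (LinearMap.applyₗ (euT n K p.1 p.2)).smulRight (hIu n K p.1 p.2)

noncomputable def S : (un n K × Module.Dual K (un n K)) →ₗ[K] Iu n K :=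
  LinearMap.coprod (S1 n K) (S2 n K)

variable {n K}

lemma S1_apply (x : un n K) :
    S1 n K x = ∑ p : Fin n × Fin n,
      ((x : Matrix (Fin n) (Fin n) K) p.1 p.2) • gIu n K p.1 p.2 := by
  simp [S1, LinearMap.sum_apply, LinearMap.smulRight_apply, estar_apply]

lemma S2_apply (f : Module.Dual K (un n K)) :
    S2 n K f = ∑ p : Fin n × Fin n, (f (euT n K p.1 p.2)) • hIu n K p.1 p.2 := by
  simp [S2, LinearMap.sum_apply, LinearMap.smulRight_apply]

lemma S1_eU (i j : Fin n) (h : i ≤ j) : S1 n K (eU n K i j h) = gIu n K i j := by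
  rw [S1_apply, Finset.sum_eq_single (i, j)]
  · rw [coe_eU, Matrix.single_apply_same, one_smul]
  · intro p _ hp
    have hne : ¬(i = p.1 ∧ j = p.2) := by
      rintro ⟨h1, h2⟩; exact hp (Prod.ext h1.symm h2.symm)
    rw [coe_eU, Matrix.single_apply_of_ne _ _ _ _ _ hne, zero_smul]
  · intro hmem; exact absurd (Finset.mem_univ _) hmem

lemma S2_estar (i j : Fin n) (h : i ≤ j) : S2 n K (estar n K i j) = hIu n K i j := by
  rw [S2_apply, Finset.sum_eq_single (i, j)]
  · rw [euT, dif_pos h, estar_apply, coe_eU, Matrix.single_apply_same, one_smul]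
  · intro p _ hp
    by_cases hp2 : p.1 ≤ p.2
    · have hne : ¬(p.1 = i ∧ p.2 = j) := by
        rintro ⟨h1, h2⟩; exact hp (Prod.ext h1 h2)
      rw [euT, dif_pos hp2, estar_apply, coe_eU,
        Matrix.single_apply_of_ne _ _ _ _ _ hne, zero_smul]
    · rw [euT, dif_neg hp2, map_zero, zero_smul]
  · intro hmem; exact absurd (Finset.mem_univ _) hmem

lemma un_decomp (x : un n K) :
    ∑ p : Fin n × Fin n, ((x : Matrix (Fin n) (Fin n) K) p.1 p.2) • euT n K p.1 p.2 = x := by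
  apply Subtype.ext
  rw [AddSubmonoidClass.coe_finset_sum]
  have hterm : ∀ p : Fin n × Fin n,
      ((((x : Matrix (Fin n) (Fin n) K) p.1 p.2) • euT n K p.1 p.2 : un n K)
        : Matrix (Fin n) (Fin n) K)
      = Matrix.single p.1 p.2 ((x : Matrix (Fin n) (Fin n) K) p.1 p.2) := by
    intro p
    by_cases h : p.1 ≤ p.2
    · rw [show ((((x : Matrix (Fin n) (Fin n) K) p.1 p.2) • euT n K p.1 p.2 : un n K)
          : Matrix (Fin n) (Fin n) K)
          = ((x : Matrix (Fin n) (Fin n) K) p.1 p.2) • (euT n K p.1 p.2 : Matrix (Fin n) (Fin n) K)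
          from rfl, euT, dif_pos h, coe_eU, Matrix.smul_single, smul_eq_mul, mul_one]
    · have hx : (x : Matrix (Fin n) (Fin n) K) p.1 p.2 = 0 := x.2 _ _ (not_le.mp h)
      rw [hx, Matrix.single_zero, zero_smul]
      rfl
  rw [Finset.sum_congr rfl (fun p _ => hterm p), Fintype.sum_prod_type]
  exact (Matrix.matrix_eq_sum_single _).symm

lemma dual_decomp (f : Module.Dual K (un n K)) :
    ∑ p : Fin n × Fin n, (f (euT n K p.1 p.2)) • estar n K p.1 p.2 = f := by
  apply LinearMap.ext
  intro x
  rw [LinearMap.sum_apply]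
  have : ∀ p : Fin n × Fin n,
      ((f (euT n K p.1 p.2)) • estar n K p.1 p.2) x
        = f (((x : Matrix (Fin n) (Fin n) K) p.1 p.2) • euT n K p.1 p.2) := by
    intro p
    rw [LinearMap.smul_apply, map_smul, smul_eq_mul, smul_eq_mul, mul_comm, estar_apply]
  rw [Finset.sum_congr rfl (fun p _ => this p), ← map_sum, un_decomp]

lemma T_S1 (x : un n K) : T n K (S1 n K x) = (x, 0) := by
  rw [S1_apply, map_sum]
  refine prod_eq ?_ ?_
  · rw [Prod.fst_sum]
    have hterm : ∀ p : Fin n × Fin n,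
        (T n K (((x : Matrix (Fin n) (Fin n) K) p.1 p.2) • gIu n K p.1 p.2)).1
          = ((x : Matrix (Fin n) (Fin n) K) p.1 p.2) • euT n K p.1 p.2 := by
      intro p
      rw [map_smul, Prod.smul_fst]
      congr 1
      rcases lt_trichotomy p.1 p.2 with h | h | h
      · rw [gIu, if_neg h.ne, T_xe_lt h, euT, dif_pos h.le]
      · rw [gIu, if_pos h, T_aE]
        refine Subtype.ext ?_
        show (Matrix.single p.1 p.1 1 : Matrix (Fin n) (Fin n) K) = _
        rw [euT, dif_pos (le_of_eq h), coe_eU, h]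
      · rw [gIu, if_neg h.ne', T_xe_gt h, euT, dif_neg (not_le.mpr h)]
    rw [Finset.sum_congr rfl (fun p _ => hterm p), un_decomp]
  · rw [Prod.snd_sum]
    refine Finset.sum_eq_zero (fun p _ => ?_)
    rw [map_smul, Prod.smul_snd]
    rcases lt_trichotomy p.1 p.2 with h | h | h
    · rw [gIu, if_neg h.ne, T_xe_lt h]; simp
    · rw [gIu, if_pos h, T_aE]; simp
    · have hx : (x : Matrix (Fin n) (Fin n) K) p.1 p.2 = 0 := x.2 _ _ h
      rw [hx, zero_smul]

lemma T_S2 (hK : (2:K) ≠ 0) (f : Module.Dual K (un n K)) : T n K (S2 n K f) = (0, f) := by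
  rw [S2_apply, map_sum]
  have hms : ∀ p : Fin n × Fin n,
      T n K ((f (euT n K p.1 p.2)) • hIu n K p.1 p.2)
        = (f (euT n K p.1 p.2)) • T n K (hIu n K p.1 p.2) := fun p => map_smul _ _ _
  rw [Finset.sum_congr rfl (fun p _ => hms p)]
  have hterm : ∀ p : Fin n × Fin n,
      (f (euT n K p.1 p.2)) • T n K (hIu n K p.1 p.2)
        = (0, (f (euT n K p.1 p.2)) • estar n K p.1 p.2) := by
    intro p
    by_cases h : p.1 ≤ p.2
    · rcases eq_or_lt_of_le h with he | hlt
      · rw [hIu, if_pos he, map_smul, T_bE]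
        refine prod_eq (by simp) ?_
        show f (euT n K p.1 p.2) • ((2:K)⁻¹ • ((2:K) • estar n K p.1 p.1)) = _
        rw [smul_smul, smul_smul, mul_assoc, inv_mul_cancel₀ hK, mul_one, he]
      · rw [hIu, if_neg hlt.ne, T_xe_gt hlt, Prod.smul_mk, smul_zero]
    · rw [euT, dif_neg h, map_zero, zero_smul, zero_smul]
      rfl
  rw [Finset.sum_congr rfl (fun p _ => hterm p)]
  refine prod_eq ?_ ?_
  · rw [Prod.fst_sum]
    exact Finset.sum_eq_zero (fun p _ => rfl)
  · rw [Prod.snd_sum]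
    exact dual_decomp f

lemma TSinv (hK : (2:K) ≠ 0) (w : un n K × Module.Dual K (un n K)) :
    T n K (S n K w) = w := by
  obtain ⟨x, f⟩ := w
  rw [S, LinearMap.coprod_apply, map_add, T_S1, T_S2 hK, Prod.mk_add_mk, add_zero, zero_add]

lemma STinv (hK : (2:K) ≠ 0) (u : Iu n K) : S n K (T n K u) = u := by
  have hcomp : (S n K).comp (T n K) = LinearMap.id := by
    apply Module.Basis.ext Finsupp.basisSingleOne
    intro s
    simp only [Finsupp.coe_basisSingleOne, LinearMap.comp_apply, LinearMap.id_apply]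
    rcases s with ⟨⟨i, j⟩, hij⟩ | i | i
    · rw [show Finsupp.single (Sum.inl ⟨(i,j),hij⟩ : IuIdx n) (1:K) = xE n K i j hij from rfl,
        T_xE hij]
      rcases lt_or_gt_of_ne hij with h | h
      · rw [dif_pos h, S, LinearMap.coprod_apply, map_zero, add_zero, S1_eU, gIu,
          if_neg hij, xe, dif_pos hij, xE]
      · rw [dif_neg (fun hc => absurd hc (not_lt.mpr h.le)), S, LinearMap.coprod_apply,
          map_zero, zero_add, S2_estar j i h.le, hIu, if_neg (fun hc => hij hc.symm), xe,
          dif_pos hij, xE]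
    · rw [show Finsupp.single (Sum.inr (Sum.inl i) : IuIdx n) (1:K) = aE n K i from rfl,
        T_aE, S, LinearMap.coprod_apply, map_zero, add_zero, S1_eU, gIu, if_pos rfl, aE]
    · rw [show Finsupp.single (Sum.inr (Sum.inr i) : IuIdx n) (1:K) = bE n K i from rfl,
        T_bE, S, LinearMap.coprod_apply, map_zero, zero_add, map_smul, S2_estar i i le_rfl,
        hIu, if_pos rfl, smul_smul, mul_inv_cancel₀ hK, one_smul, bE]
  have := LinearMap.congr_fun hcomp u
  rwa [LinearMap.comp_apply, LinearMap.id_apply] at this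

lemma br_single (s t : IuIdx n) :
    br n K (Finsupp.single s 1) (Finsupp.single t 1) = bb n K s t := by
  simp [br, Finsupp.lift_apply, Finsupp.sum_single_index]

lemma part2 (hK : (2:K) ≠ 0) (u v : Iu n K) :
    T n K (br n K u v) = sd n K (T n K u) (T n K v) := by
  have h : (br n K).compr₂ (T n K) = (sdB n K).compl₁₂ (T n K) (T n K) := by
    refine Module.Basis.ext Finsupp.basisSingleOne fun s => ?_
    refine Module.Basis.ext Finsupp.basisSingleOne fun t => ?_
    simp only [Finsupp.coe_basisSingleOne]
    rw [LinearMap.compr₂_apply, LinearMap.compl₁₂_apply, br_single, sdB,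
      LinearMap.mk₂_apply]
    exact key_all hK s t
  have := LinearMap.congr_fun (LinearMap.congr_fun h u) v
  rwa [LinearMap.compr₂_apply, LinearMap.compl₁₂_apply, sdB, LinearMap.mk₂_apply] at this

end Aux5

/-- `T` is an isomorphism of Lie algebras from `Iuₙ` to `uₙ ⋉ uₙ*`. -/
theorem stmt2 (n : ℕ) (hn : 2 ≤ n) (K : Type*) [Field K] (hK : (2 : K) ≠ 0) :
    Function.Bijective (T n K) ∧
    ∀ u v : Iu n K, T n K (br n K u v) = sd n K (T n K u) (T n K v) := by
  constructor
  · rw [Function.bijective_iff_has_inverse]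
    exact ⟨S n K, fun u => STinv hK u, fun w => TSinv hK w⟩
  · exact fun u v => part2 hK u v
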